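/- Let k ≥ 2 and define w_n by w_0 = ε, w_{n+1} = (w_n δ_{n+1})^E with δ_1 = 0 and δ_2 = ⋯ = δ_{k+1} = 1. Then w_{k+1} = 01 1001 (1001)^{k-1} = 01(1001)^k, and {2, 4} is a string attractor of w_{k+1} of size two. -/

import Mathlib

def occursAt (f w : List Bool) (i : ℕ) : Prop :=
  i + f.length ≤ w.length ∧ (w.drop i).take f.length = f

def IsAttractor (w : List Bool) (Γ : Finset ℕ) : Prop :=
  (∀ γ ∈ Γ, γ < w.length) ∧
  ∀ f : List Bool, f ≠ [] → f <:+: w →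
    ∃ i, occursAt f w i ∧ ∃ γ ∈ Γ, i ≤ γ ∧ γ < i + f.length

def Emap (w : List Bool) : List Bool := (w.reverse).map (fun b => !b)

def IsPal (w : List Bool) : Prop := w.reverse = w

def IsAntipal (w : List Bool) : Prop := Emap w = w

def IsPalClosure (w p : List Bool) : Prop :=
  IsPal p ∧ w <+: p ∧ ∀ q, IsPal q → w <+: q → p.length ≤ q.length

def IsAntipalClosure (w p : List Bool) : Prop :=
  IsAntipal p ∧ w <+: p ∧ ∀ q, IsAntipal q → w <+: q → p.length ≤ q.length

/-! ### Auxiliary definitions -/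

def gfun (i : ℕ) : Bool := decide (i % 4 = 1 ∨ i % 4 = 2)

def ublk : List Bool := [true, false, false, true]

def uu (n : ℕ) : List Bool := [false, true] ++ (List.replicate n ublk).flatten

lemma uu_length (n : ℕ) : (uu n).length = 4 * n + 2 := by
  induction n with
  | zero => rfl
  | succ m ih =>
    have : uu (m+1) = uu m ++ ublk := by
      simp [uu, List.replicate_succ', ublk]
    rw [this, List.length_append, ih]
    simp [ublk]; omega

lemma uu_succ (n : ℕ) : uu (n+1) = uu n ++ ublk := by
  simp [uu, List.replicate_succ', ublk]

lemma uu_getElem? (n : ℕ) : ∀ i, i < 4 * n + 2 → (uu n)[i]? = some (gfun i) := by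
  induction n with
  | zero =>
    intro i hi
    interval_cases i <;> rfl
  | succ m ih =>
    intro i hi
    rw [uu_succ]
    by_cases h : i < 4 * m + 2
    · rw [List.getElem?_append, if_pos (by rw [uu_length]; exact h)]
      exact ih i h
    · rw [List.getElem?_append_right (by rw [uu_length]; omega)]
      rw [uu_length]
      have hr : i - (4 * m + 2) = 0 ∨ i - (4 * m + 2) = 1 ∨
          i - (4 * m + 2) = 2 ∨ i - (4 * m + 2) = 3 := by omega
      rcases hr with hr | hr | hr | hr <;> rw [hr]
      · have h4 : i % 4 = 2 := by omega
        simp [ublk, gfun, h4]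
      · have h4 : i % 4 = 3 := by omega
        simp [ublk, gfun, h4]
      · have h4 : i % 4 = 0 := by omega
        simp [ublk, gfun, h4]
      · have h4 : i % 4 = 1 := by omega
        simp [ublk, gfun, h4]

lemma Emap_length (v : List Bool) : (Emap v).length = v.length := by
  simp [Emap]

lemma uu_antipal (n : ℕ) : IsAntipal (uu n) := by
  apply List.ext_getElem?
  intro i
  by_cases hi : i < 4 * n + 2
  · have hlen : (uu n).length = 4 * n + 2 := uu_length n
    rw [Emap, List.getElem?_map, List.getElem?_reverse (by omega), hlen,
      uu_getElem? n _ (by omega), uu_getElem? n _ hi]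
    simp only [Option.map_some]
    congr 1
    have h4 : (i + (4 * n + 2 - 1 - i)) % 4 = 1 := by omega
    by_cases h1 : i % 4 = 1 ∨ i % 4 = 2 <;>
      by_cases h2 : (4 * n + 2 - 1 - i) % 4 = 1 ∨ (4 * n + 2 - 1 - i) % 4 = 2 <;>
        simp [gfun, h1, h2] <;> omega
  · rw [List.getElem?_eq_none (by rw [Emap_length, uu_length]; omega),
      List.getElem?_eq_none (by rw [uu_length]; omega)]

lemma antipal_get {q : List Bool} (hq : IsAntipal q) {i : ℕ} (h : i < q.length) :
    q[i]? = (q[q.length - 1 - i]?).map (fun b => !b) := by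
  conv_lhs => rw [← hq]
  rw [Emap, List.getElem?_map, List.getElem?_reverse h]

lemma prefix_getElem? {x p : List Bool} (h : x <+: p) {i : ℕ} (hi : i < x.length) :
    p[i]? = x[i]? := by
  obtain ⟨t, rfl⟩ := h
  rw [List.getElem?_append, if_pos hi]

lemma Emap_append (a b : List Bool) : Emap (a ++ b) = Emap b ++ Emap a := by
  simp [Emap]

lemma Emap_Emap (a : List Bool) : Emap (Emap a) = a := by
  simp [Emap, List.map_reverse, List.map_map, Function.comp_def, Bool.not_not]

lemma closure_unique {x p q : List Bool} (hp : IsAntipalClosure x p)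
    (hq : IsAntipalClosure x q) : p = q := by
  obtain ⟨hp1, hp2, hp3⟩ := hp
  obtain ⟨hq1, hq2, hq3⟩ := hq
  have hcand : IsAntipal (x ++ Emap x) := by
    rw [IsAntipal, Emap_append, Emap_Emap]
  have hple : p.length ≤ x.length + x.length := by
    have := hp3 (x ++ Emap x) hcand ⟨Emap x, rfl⟩
    rwa [List.length_append, Emap_length] at this
  have hlen : p.length = q.length :=
    le_antisymm (hp3 q hq1 hq2) (hq3 p hp1 hp2)
  have hxp := hp2.length_le
  apply List.ext_getElem?
  intro i
  by_cases hi : i < p.length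
  · by_cases hix : i < x.length
    · rw [prefix_getElem? hp2 hix, prefix_getElem? hq2 hix]
    · have hj : p.length - 1 - i < x.length := by omega
      rw [antipal_get hp1 hi, antipal_get hq1 (by omega), hlen,
        prefix_getElem? hp2 (by omega), prefix_getElem? hq2 (by rw [← hlen]; omega)]
  · rw [List.getElem?_eq_none (by omega), List.getElem?_eq_none (by omega)]

lemma base_closure : IsAntipalClosure [false] (uu 0) := by
  refine ⟨uu_antipal 0, ⟨[true], rfl⟩, ?_⟩
  intro q hq hpre
  have h1 : 1 ≤ q.length := hpre.length_le
  by_contra hlt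
  push_neg at hlt
  have hq1 : q.length = 1 := by
    have : (uu 0).length = 2 := rfl
    omega
  have h0 : q[0]? = some false := by
    rw [prefix_getElem? hpre (by simp)]; rfl
  have := antipal_get hq (by omega : 0 < q.length)
  rw [hq1] at this
  simp only [h0] at this
  simp at this

lemma step_closure (n : ℕ) : IsAntipalClosure (uu n ++ [true]) (uu (n+1)) := by
  refine ⟨uu_antipal (n+1), ⟨[false, false, true], by rw [uu_succ]; simp [ublk]⟩, ?_⟩
  intro q hq hpre
  have hplen : (uu n ++ [true]).length = 4 * n + 3 := by
    simp [uu_length]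
  have hle : 4 * n + 3 ≤ q.length := by
    have := hpre.length_le; omega
  by_contra hlt
  push_neg at hlt
  rw [uu_length] at hlt
  -- q.length ∈ {4n+3, 4n+4, 4n+5}
  have hm : q.length = 4*n+3 ∨ q.length = 4*n+4 ∨ q.length = 4*n+5 := by omega
  -- pick i, j with i + j = q.length - 1, q[i]? = some true, q[j]? = some true
  have pget : ∀ i, i < 4 * n + 2 → (uu n ++ [true])[i]? = some (gfun i) := by
    intro i hi
    rw [List.getElem?_append, if_pos (by rw [uu_length]; exact hi)]
    exact uu_getElem? n i hi
  have plast : (uu n ++ [true])[4*n+2]? = some true := by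
    rw [List.getElem?_append_right (by rw [uu_length])]
    rw [uu_length]; simp
  have qget : ∀ i, i < 4 * n + 2 → q[i]? = some (gfun i) := by
    intro i hi
    rw [prefix_getElem? hpre (by omega)]
    exact pget i hi
  have qlast : q[4*n+2]? = some true := by
    rw [prefix_getElem? hpre (by omega)]
    exact plast
  obtain ⟨i, j, hij, hqi, hqj⟩ :
      ∃ i j, i + j + 1 = q.length ∧ q[i]? = some true ∧ q[j]? = some true := by
    rcases hm with hm | hm | hm
    · refine ⟨1, 4*n+1, by omega, by rw [qget 1 (by omega)]; rfl, ?_⟩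
      rw [qget (4*n+1) (by omega)]
      have h4 : (4*n+1) % 4 = 1 := by omega
      simp [gfun, h4]
    · refine ⟨1, 4*n+2, by omega, ?_, qlast⟩
      rw [qget 1 (by omega)]; rfl
    · refine ⟨2, 4*n+2, by omega, ?_, qlast⟩
      rcases Nat.eq_zero_or_pos n with h | h
      · subst h; exact qlast
      · rw [qget 2 (by omega)]; rfl
  have := antipal_get hq (show i < q.length by omega)
  rw [show q.length - 1 - i = j by omega, hqi, hqj] at this
  simp at this

/-! ### occurrence lemmas -/

lemma occursAt_getElem? {f v : List Bool} {i : ℕ} (h : occursAt f v i) :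
    ∀ t, t < f.length → v[i+t]? = f[t]? := by
  intro t ht
  obtain ⟨hlen, heq⟩ := h
  conv_rhs => rw [← heq]
  rw [List.getElem?_take, if_pos ht, List.getElem?_drop]

lemma occursAt_mk {f v : List Bool} {i : ℕ} (hlen : i + f.length ≤ v.length)
    (h : ∀ t, t < f.length → v[i+t]? = f[t]?) : occursAt f v i := by
  refine ⟨hlen, ?_⟩
  apply List.ext_getElem?
  intro t
  by_cases ht : t < f.length
  · rw [List.getElem?_take, if_pos ht, List.getElem?_drop, h t ht]
  · rw [List.getElem?_eq_none (le_trans (List.length_take_le _ _) (by omega)),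
      List.getElem?_eq_none (by omega)]

lemma exists_occursAt {f v : List Bool} (h : f <:+: v) : ∃ i, occursAt f v i := by
  obtain ⟨s, t, rfl⟩ := h
  refine ⟨s.length, by simp, ?_⟩
  rw [List.drop_append]
  simp

theorem stmt_15 (k : ℕ) (hk : 2 ≤ k) (w : ℕ → List Bool)
    (h0 : w 0 = [])
    (h1 : IsAntipalClosure (w 0 ++ [false]) (w 1))
    (hclos : ∀ n, 1 ≤ n → n ≤ k → IsAntipalClosure (w n ++ [true]) (w (n + 1))) :
    w (k + 1) = [false, true] ++ (List.replicate k [true, false, false, true]).flatten ∧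
    IsAttractor (w (k + 1)) ({2, 4} : Finset ℕ) ∧
    ({2, 4} : Finset ℕ).card = 2 := by
  have key : ∀ n, n ≤ k → w (n + 1) = uu n := by
    intro n
    induction n with
    | zero =>
      intro _
      rw [h0] at h1
      simp only [List.nil_append] at h1
      exact closure_unique h1 base_closure
    | succ m ih =>
      intro hm
      have hw : w (m+1) = uu m := ih (by omega)
      have hc := hclos (m+1) (by omega) hm
      rw [hw] at hc
      exact closure_unique hc (step_closure m)
  have hwk : w (k+1) = uu k := key k le_rfl
  have hlen : (w (k+1)).length = 4 * k + 2 := by rw [hwk, uu_length]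
  have hget : ∀ i, i < 4 * k + 2 → (w (k+1))[i]? = some (gfun i) := by
    intro i hi; rw [hwk]; exact uu_getElem? k i hi
  refine ⟨by rw [hwk]; rfl, ⟨?_, ?_⟩, by decide⟩
  · intro γ hγ
    fin_cases hγ <;> omega
  · intro f hf hinf
    obtain ⟨j, hj⟩ := exists_occursAt hinf
    have hL : 1 ≤ f.length := by
      cases f with
      | nil => exact absurd rfl hf
      | cons a l => simp
    have hjlen : j + f.length ≤ 4 * k + 2 := by
      have := hj.1; omega
    -- shift lemma: any position with same residue and in-range is an occurrence
    have shift : ∀ i, i % 4 = j % 4 → i + f.length ≤ 4 * k + 2 →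
        occursAt f (w (k+1)) i := by
      intro i hmod hilen
      apply occursAt_mk (by omega)
      intro t ht
      rw [hget (i+t) (by omega), ← occursAt_getElem? hj t ht,
        hget (j+t) (by omega)]
      have h4 : (i+t) % 4 = (j+t) % 4 := by omega
      simp [gfun, h4]
    set i₀ := j % 4 with hi₀
    have hi₀4 : i₀ < 4 := Nat.mod_lt _ (by norm_num)
    have hocc₀ : occursAt f (w (k+1)) i₀ := shift i₀ (by omega) (by omega)
    have fget : ∀ t, t < f.length → f[t]? = some (gfun (i₀ + t)) := by
      intro t ht
      rw [← occursAt_getElem? hocc₀ t ht, hget (i₀+t) (by omega)]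
    by_cases hA : i₀ ≤ 2 ∧ 2 < i₀ + f.length
    · exact ⟨i₀, hocc₀, 2, by simp, hA.1, hA.2⟩
    · push_neg at hA
      by_cases hB : i₀ = 3 ∧ 2 ≤ f.length
      · obtain ⟨hB1, hB2⟩ := hB
        exact ⟨i₀, hocc₀, 4, by simp, by omega, by omega⟩
      · push_neg at hB
        -- remaining: (i₀ = 0 ∧ L ≤ 2) ∨ (i₀ = 1 ∧ L = 1) ∨ (i₀ = 3 ∧ L = 1)
        have hcases : (i₀ = 0 ∧ f.length ≤ 2) ∨ (i₀ = 1 ∧ f.length = 1)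
            ∨ (i₀ = 3 ∧ f.length = 1) := by
          rcases Nat.lt_or_ge i₀ 3 with h3 | h3
          · have h2 := hA (by omega)
            have h01 : i₀ = 0 ∨ i₀ = 1 := by omega
            rcases h01 with h | h
            · exact Or.inl ⟨h, by omega⟩
            · exact Or.inr (Or.inl ⟨h, by omega⟩)
          · have h3' : i₀ = 3 := by omega
            have := hB h3'
            exact Or.inr (Or.inr ⟨h3', by omega⟩)
        rcases hcases with ⟨h0', hL2⟩ | ⟨h1', hL1⟩ | ⟨h3', hL1⟩
        · -- f occurs at 4, residue 0 = i₀
          have : occursAt f (w (k+1)) 4 := shift 4 (by omega) (by omega)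
          exact ⟨4, this, 4, by simp, by omega, by omega⟩
        · -- f = [true], occurs at 2
          refine ⟨2, occursAt_mk (by omega) ?_, 2, by simp, by omega, by omega⟩
          intro t ht
          rw [hL1] at ht
          interval_cases t
          rw [fget 0 (by omega), hget 2 (by omega), h1']
          rfl
        · -- f = [false], occurs at 4
          refine ⟨4, occursAt_mk (by omega) ?_, 4, by simp, by omega, by omega⟩
          intro t ht
          rw [hL1] at ht
          interval_cases t
          rw [fget 0 (by omega), hget 4 (by omega), h3']
          rfl
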